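/- arXiv:1802.05542 — 2 statements merged into one kernel-verified Lean document; each statement's English description precedes it below -/
import Mathlib

section
/- There is no natural number n > 16 such that φ(Q_n) = 6·(10^m − 1)/9 for some m ≥ 2, where Q_n is the n-th associated Pell number. -/
def pellP : ℕ → ℕ
  | 0 => 0
  | 1 => 1
  | n + 2 => 2 * pellP (n + 1) + pellP n

def pellQ : ℕ → ℕ
  | 0 => 1
  | 1 => 1
  | n + 2 => 2 * pellQ (n + 1) + pellQ n

lemma pellQ_rec (n : ℕ) : pellQ (n + 2) = 2 * pellQ (n + 1) + pellQ n := rfl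

lemma pellQ_odd : ∀ n, pellQ n % 2 = 1 := by
  have h : ∀ n, pellQ n % 2 = 1 ∧ pellQ (n + 1) % 2 = 1 := by
    intro n
    induction n with
    | zero => exact ⟨rfl, rfl⟩
    | succ k ih =>
      refine ⟨ih.2, ?_⟩
      have e : k + 1 + 1 = k + 2 := rfl
      rw [e, pellQ_rec]
      omega
  exact fun n => (h n).1

lemma pellQ_ge : ∀ n, 2 ^ n ≤ pellQ (n + 1) := by
  have h : ∀ n, 2 ^ n ≤ pellQ (n + 1) ∧ 2 ^ (n + 1) ≤ pellQ (n + 2) := by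
    intro n
    induction n with
    | zero => exact ⟨by norm_num [pellQ], by rw [pellQ_rec]; norm_num [pellQ]⟩
    | succ k ih =>
      refine ⟨ih.2, ?_⟩
      have e : k + 1 + 2 = (k + 1) + 2 := rfl
      rw [e, pellQ_rec (k + 1)]
      have h2 := ih.2
      have h3 : 2 ^ (k + 1 + 1) = 2 * 2 ^ (k + 1) := by ring
      rw [h3, show k + 1 + 1 = k + 2 from rfl]
      omega
  exact fun n => (h n).1

lemma pellQ_period : ∀ n, pellQ (n + 24) % 80 = pellQ n % 80 ∧
    pellQ (n + 25) % 80 = pellQ (n + 1) % 80 := by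
  intro n
  induction n with
  | zero => exact ⟨by decide, by decide⟩
  | succ k ih =>
    refine ⟨ih.2, ?_⟩
    have e1 : k + 1 + 25 = (k + 24) + 2 := by omega
    have e2 : k + 1 + 1 = k + 2 := by omega
    rw [e1, e2, pellQ_rec (k + 24), pellQ_rec k]
    have h1 := ih.1
    have h2 := ih.2
    have e3 : k + 24 + 1 = k + 25 := by omega
    rw [e3]
    omega

lemma pellQ_mod24 : ∀ n, pellQ n % 80 = pellQ (n % 24) % 80 := by
  intro n
  induction n using Nat.strong_induction_on with
  | _ n ih =>
    rcases Nat.lt_or_ge n 24 with h | h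
    · rw [Nat.mod_eq_of_lt h]
    · have e : n = (n - 24) + 24 := by omega
      rw [e, (pellQ_period (n - 24)).1, ih (n - 24) (by omega), Nat.add_mod_right]

lemma struct {Q : ℕ} (hodd : Q % 2 = 1) (hQ : 2 < Q) (hphi : Q.totient % 4 = 2) :
    ∃ p k, Nat.Prime p ∧ 0 < k ∧ Q = p ^ k := by
  obtain ⟨p, hp, hpd⟩ := Nat.exists_prime_and_dvd (show Q ≠ 1 by omega)
  have h0 : Q ≠ 0 := by omega
  have hk1 : 0 < Q.factorization p := hp.factorization_pos_of_dvd h0 hpd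
  refine ⟨p, Q.factorization p, hp, hk1, ?_⟩
  set k := Q.factorization p with hk
  set r := Q / p ^ k with hr
  have heq : p ^ k * r = Q := Nat.ordProj_mul_ordCompl_eq_self Q p
  have hrd : r ∣ Q := Nat.ordCompl_dvd Q p
  have hcop : (p ^ k).Coprime r := (Nat.coprime_ordCompl hp h0).pow_left k
  clear_value k r
  by_contra hne
  have hr1 : r ≠ 1 := by intro h1; rw [h1, mul_one] at heq; exact hne heq.symm
  have hr0 : r ≠ 0 := by intro h1; rw [h1, mul_zero] at heq; omega
  have h2Q : ¬ (2 ∣ Q) := by omega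
  have hrodd : r % 2 = 1 := by
    have : ¬ (2 ∣ r) := fun hh => h2Q (hh.trans hrd)
    omega
  have hpne2 : p ≠ 2 := by rintro rfl; exact h2Q hpd
  have hp3 : 3 ≤ p := by have := hp.two_le; omega
  have hpk : 2 < p ^ k := lt_of_lt_of_le (by omega) (Nat.le_self_pow (by omega) p)
  have htm : Q.totient = (p ^ k).totient * r.totient := by
    rw [← heq, Nat.totient_mul hcop]
  have he1 : Even (p ^ k).totient := Nat.totient_even hpk
  have he2 : Even r.totient := Nat.totient_even (by omega : 2 < r)
  obtain ⟨x, hx⟩ := he1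
  obtain ⟨y, hy⟩ := he2
  rw [htm, hx, hy] at hphi
  have : (x + x) * (y + y) = 4 * (x * y) := by ring
  omega

theorem no_repdigit_six_totient_pellQ :
    ¬ ∃ (n m : ℕ), 16 < n ∧ 2 ≤ m ∧ 9 * Nat.totient (pellQ n) = 6 * (10 ^ m - 1) := by
  rintro ⟨n, m, hn, hm, h9⟩
  have hX : (100 : ℕ) ≤ 10 ^ m := by
    calc (100 : ℕ) = 10 ^ 2 := by norm_num
    _ ≤ 10 ^ m := Nat.pow_le_pow_right (by norm_num) hm
  have h3φ : 3 * Nat.totient (pellQ n) = 2 * (10 ^ m - 1) := by omega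
  have hodd : pellQ n % 2 = 1 := pellQ_odd n
  have hbig : 2 ^ 16 ≤ pellQ n := by
    have h1 := pellQ_ge (n - 1)
    have h2 : 2 ^ 16 ≤ 2 ^ (n - 1) := Nat.pow_le_pow_right (by norm_num) (by omega)
    rw [show (n - 1) + 1 = n by omega] at h1
    omega
  have h65536 : (2 : ℕ) ^ 16 = 65536 := by norm_num
  have h2Q : 2 < pellQ n := by omega
  have hphi4 : Nat.totient (pellQ n) % 4 = 2 := by
    have h12 : ∀ j, (10 : ℕ) ^ (j + 2) % 12 = 4 := by
      intro j
      induction j with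
      | zero => norm_num
      | succ i ih =>
        have e : (10 : ℕ) ^ (i + 1 + 2) = 10 * 10 ^ (i + 2) := by ring
        rw [e]
        omega
    have := h12 (m - 2)
    rw [show m - 2 + 2 = m by omega] at this
    omega
  obtain ⟨p, k, hp, hk, hQpk⟩ := struct hodd h2Q hphi4
  have hφeq : Nat.totient (pellQ n) = p ^ (k - 1) * (p - 1) := by
    rw [hQpk, Nat.totient_prime_pow hp hk]
  have hp2 : 2 ≤ p := hp.two_le
  have hpodd : p % 2 = 1 := by
    by_contra hh
    have hpe : p = 2 :=
      (Nat.prime_dvd_prime_iff_eq Nat.prime_two hp).mp (Nat.dvd_of_mod_eq_zero (by omega)) |>.symm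
    have hdq : (2 : ℕ) ∣ pellQ n := by
      rw [hQpk, hpe]; exact dvd_pow_self 2 (by omega)
    omega
  have hQpt : pellQ n = p ^ (k - 1) * p := by
    rw [hQpk, ← pow_succ]
    congr 1
    omega
  have htpos : 1 ≤ p ^ (k - 1) := Nat.one_le_pow _ _ (by omega)
  rcases Nat.lt_or_ge m 3 with hm2 | hm3
  · -- m = 2 : totient = 66, size contradiction
    have hφ66 : p ^ (k - 1) * (p - 1) = 66 := by
      rw [← hφeq]
      interval_cases m
      · omega
    have htle : p ^ (k - 1) ≤ 66 := by
      calc p ^ (k - 1) = p ^ (k - 1) * 1 := by ring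
      _ ≤ p ^ (k - 1) * (p - 1) := Nat.mul_le_mul_left _ (by omega)
      _ = 66 := hφ66
    have hple : p - 1 ≤ 66 := by
      calc p - 1 = 1 * (p - 1) := by ring
      _ ≤ p ^ (k - 1) * (p - 1) := Nat.mul_le_mul_right _ htpos
      _ = 66 := hφ66
    have : pellQ n ≤ 66 * 67 := by
      rw [hQpt]
      exact Nat.mul_le_mul htle (by omega)
    omega
  · -- m ≥ 3
    have h240 : (2 * (10 ^ m - 1)) % 240 = 78 := by
      have key : ∀ j, (2 * ((10 : ℕ) ^ (j + 3) - 1)) % 240 = 78 := by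
        intro j
        induction j with
        | zero => norm_num
        | succ i ih =>
          have e : (10 : ℕ) ^ (i + 1 + 3) = 10 * 10 ^ (i + 3) := by ring
          have hge : 1 ≤ (10 : ℕ) ^ (i + 3) := Nat.one_le_pow _ _ (by norm_num)
          rw [e]
          omega
      have := key (m - 3)
      rw [show m - 3 + 3 = m by omega] at this
      exact this
    have hφ80 : Nat.totient (pellQ n) % 80 = 26 := by omega
    have hp5 : p % 5 ≠ 0 := by
      intro hh
      have hp5' : p = 5 :=
        ((Nat.prime_dvd_prime_iff_eq (by norm_num) hp).mp (Nat.dvd_of_mod_eq_zero hh)).symm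
      rcases Nat.lt_or_ge k 2 with hk2 | hk2
      · have hk1' : k = 1 := by omega
        rw [hp5', hk1'] at hφeq
        simp at hφeq
        omega
      · have hd5 : (5 : ℕ) ∣ Nat.totient (pellQ n) := by
          rw [hφeq, hp5']
          exact Dvd.dvd.mul_right (dvd_pow_self 5 (by omega)) _
        omega
    set a := p % 80 with ha
    have ha80 : a < 80 := Nat.mod_lt _ (by norm_num)
    have ha2 : a % 2 = 1 := by omega
    have ha5 : a % 5 ≠ 0 := by omega
    have h4 : p ^ 4 % 80 = 1 := by
      rw [Nat.pow_mod]
      exact (by decide : ∀ b < 80, b % 2 = 1 → b % 5 ≠ 0 → b ^ 4 % 80 = 1) a ha80 ha2 ha5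
    set r := (k - 1) % 4 with hrdef
    set q := (k - 1) / 4 with hqdef
    have hr4 : r < 4 := Nat.mod_lt _ (by norm_num)
    have hsplit : k - 1 = 4 * q + r := by rw [hrdef, hqdef]; omega
    have hTmod : p ^ (k - 1) % 80 = a ^ r % 80 := by
      have e : p ^ (k - 1) = (p ^ 4) ^ q * p ^ r := by
        rw [← pow_mul, ← pow_add, hsplit]
      rw [e, Nat.mul_mod, Nat.pow_mod, h4, one_pow, Nat.pow_mod p r 80]
      simp [Nat.mod_mod_of_dvd]
      rfl
    have hQmod : pellQ n % 80 = a ^ (r + 1) % 80 := by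
      have e : p ^ k = (p ^ 4) ^ q * p ^ (r + 1) := by
        rw [← pow_mul, ← pow_add]
        congr 1
        omega
      rw [hQpk, e, Nat.mul_mod, Nat.pow_mod, h4, one_pow, Nat.pow_mod p (r + 1) 80]
      simp [Nat.mod_mod_of_dvd]
      rfl
    have hφmod : (a ^ r * (a - 1)) % 80 = 26 := by
      have e1 : (p - 1) % 80 = a - 1 := by omega
      have e2 : Nat.totient (pellQ n) % 80 = (a ^ r * (a - 1)) % 80 := by
        rw [hφeq, Nat.mul_mod, hTmod, e1, Nat.mod_mul_mod]
      omega
    have hs : n % 24 < 24 := Nat.mod_lt _ (by omega)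
    have hQres : pellQ n % 80 = pellQ (n % 24) % 80 := pellQ_mod24 n
    exact (by decide : ∀ b < 80, ∀ r' < 4, ∀ s < 24,
        ¬(b % 2 = 1 ∧ (b ^ r' * (b - 1)) % 80 = 26 ∧ b ^ (r' + 1) % 80 = pellQ s % 80))
      a ha80 r hr4 (n % 24) hs ⟨ha2, hφmod, by omega⟩
end

section
/- There do not exist a positive integer n and a positive integer m ≥ 1 such that P_n is prime and 9·P_n − 1 = 8·10^m, where P_n is the n-th Pell number. -/
lemma pellP_step (n : ℕ) : pellP (n + 2) = 2 * pellP (n + 1) + pellP n := rfl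

lemma pellP_per (n : ℕ) :
    ((pellP (n + 24) : ZMod 55) = pellP n) ∧ ((pellP (n + 25) : ZMod 55) = pellP (n + 1)) := by
  induction n with
  | zero => constructor <;> decide
  | succ k ih =>
    obtain ⟨h1, h2⟩ := ih
    refine ⟨h2, ?_⟩
    have e1 : k + 1 + 25 = (k + 24) + 2 := by ring
    have e2 : k + 1 + 1 = k + 2 := by ring
    rw [e1, e2, pellP_step (k + 24), pellP_step k]
    push_cast
    rw [show k + 24 + 1 = k + 25 from rfl, h1, h2]

lemma pellP_mod (n : ℕ) : ((pellP n : ZMod 55) = pellP (n % 24)) := by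
  have key : ∀ k r, ((pellP (r + 24 * k) : ZMod 55) = pellP r) := by
    intro k
    induction k with
    | zero => intro r; simp
    | succ j ih =>
      intro r
      have : r + 24 * (j + 1) = (r + 24 * j) + 24 := by ring
      rw [this, (pellP_per _).1, ih]
  conv_lhs => rw [show n = n % 24 + 24 * (n / 24) from (Nat.mod_add_div n 24).symm]
  exact key _ _

lemma ten_pow (m : ℕ) (hm : 1 ≤ m) : (10 : ZMod 55) ^ m = 10 ∨ (10 : ZMod 55) ^ m = 45 := by
  induction m with
  | zero => omega
  | succ k ih =>
    rcases Nat.eq_or_lt_of_le hm with h | h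
    · left; rw [← h]; decide
    · have hk : 1 ≤ k := by omega
      rcases ih hk with h10 | h45
      · right; rw [pow_succ, h10]; decide
      · left; rw [pow_succ, h45]; decide

theorem no_prime_pellP_repdigit_eight :
    ¬ ∃ (n m : ℕ), 0 < n ∧ 1 ≤ m ∧ (pellP n).Prime ∧
      9 * pellP n - 1 = 8 * 10 ^ m := by
  rintro ⟨n, m, hn, hm, hp, heq⟩
  have hpos : 1 ≤ pellP n := hp.one_lt.le.trans' (by omega)
  have heq' : 9 * pellP n = 8 * 10 ^ m + 1 := by omega
  have hz : (9 : ZMod 55) * pellP n = 8 * (10 : ZMod 55) ^ m + 1 := by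
    have := congrArg (fun x : ℕ => (x : ZMod 55)) heq'
    push_cast at this
    exact this
  rw [pellP_mod n] at hz
  have hr : n % 24 < 24 := Nat.mod_lt _ (by norm_num)
  have hcheck : ∀ r : Fin 24, 9 * (pellP r.val : ZMod 55) ≠ 8 * 10 + 1 ∧
      9 * (pellP r.val : ZMod 55) ≠ 8 * 45 + 1 := by decide
  rcases ten_pow m hm with h10 | h10 <;> rw [h10] at hz
  · exact (hcheck ⟨n % 24, hr⟩).1 hz
  · exact (hcheck ⟨n % 24, hr⟩).2 hz
end
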